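/- Let (A,·) be a left pre-Jacobi–Jordan algebra over a field K of characteristic ≠ 2, 3, let V be a K-vector space, and let l, r : A → End(V) be linear maps. Define on A ⊕ V the bilinear product (x,u)∗(y,v) := (x·y, l_x(v) + r_y(u)). Then (A ⊕ V, ∗) is a left pre-Jacobi–Jordan algebra if and only if for all x,y ∈ A: (1) l_{x·y} + l_x∘l_y = −l_{y·x} − l_y∘l_x, and (2) l_x∘r_y + r_y∘l_x = −r_y∘r_x − r_{x·y}. -/

import Mathlib

/-- For a left pre-Jacobi–Jordan algebra `(A, mul)` over a field of characteristic ≠ 2, 3,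
a vector space `V` and linear maps `l, r : A → End(V)`, the product
`(x,u) ∗ (y,v) = (x·y, l_x v + r_y u)` makes `A ⊕ V` a left pre-Jacobi–Jordan algebra iff
`(l, r, V)` is a bimodule of `A`. -/
theorem stmt_12 {K A V : Type*} [Field K] (h2 : (2 : K) ≠ 0) (h3 : (3 : K) ≠ 0)
    [AddCommGroup A] [Module K A] [AddCommGroup V] [Module K V]
    (mul : A →ₗ[K] A →ₗ[K] A)
    (hpre : ∀ x y z : A, mul (mul x y) z + mul x (mul y z) =
      - (mul (mul y x) z + mul y (mul x z)))
    (l r : A →ₗ[K] Module.End K V)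
    (star : A × V → A × V → A × V)
    (hstar : ∀ p q : A × V, star p q = (mul p.1 q.1, l p.1 q.2 + r q.1 p.2)) :
    (∀ p q s : A × V, star (star p q) s + star p (star q s) =
      - (star (star q p) s + star q (star p s))) ↔
    ((∀ x y : A, l (mul x y) + l x ∘ₗ l y = - l (mul y x) - l y ∘ₗ l x) ∧
     (∀ x y : A, l x ∘ₗ r y + r y ∘ₗ l x = - (r y ∘ₗ r x) - r (mul x y))) := by
  constructor
  · intro h
    constructor
    · intro x y
      ext w
      have := congrArg Prod.snd (h (x, 0) (y, 0) (0, w))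
      simp [hstar] at this
      simp [LinearMap.comp_apply]
      linear_combination (norm := abel) this
    · intro x y
      ext v
      have := congrArg Prod.snd (h (x, 0) (0, v) (y, 0))
      simp [hstar] at this
      simp [LinearMap.comp_apply]
      linear_combination (norm := abel) this
  · rintro ⟨h1, hr⟩ ⟨x, u⟩ ⟨y, v⟩ ⟨z, w⟩
    have e1 : l (mul x y) w + l x (l y w) = - l (mul y x) w - l y (l x w) := by
      have := congrArg (fun f => f w) (h1 x y)
      simpa [LinearMap.comp_apply] using this
    have e2 : l x (r z v) + r z (l x v) = - r z (r x v) - r (mul x z) v := by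
      have := congrArg (fun f => f v) (hr x z)
      simpa [LinearMap.comp_apply] using this
    have e3 : l y (r z u) + r z (l y u) = - r z (r y u) - r (mul y z) u := by
      have := congrArg (fun f => f u) (hr y z)
      simpa [LinearMap.comp_apply] using this
    simp only [hstar, map_add, Prod.mk_add_mk, Prod.neg_mk]
    refine Prod.ext ?_ ?_
    · exact hpre x y z
    · linear_combination (norm := module) e1 + e2 + e3
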